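/- Let E be a real inner product space with inner product ⟨·,·⟩_H, let y_1, …, y_M ∈ E be a finite family of snapshots, and let φ_1, …, φ_d ∈ E be POD modes for this family: the φ_i are orthonormal with respect to ⟨·,·⟩_H, every snapshot y_n lies in span{φ_1, …, φ_d}, and there exist nonnegative reals λ_1, …, λ_d (the POD eigenvalues) such that (1/M) Σ_{n=1}^M ⟨y_n, φ_i⟩_H ⟨y_n, φ_j⟩_H = λ_i δ_{ij} for all 1 ≤ i, j ≤ d. Let ⟨·,·⟩_W be a second inner product on E with associated norm ‖·‖_W, and let P_r : E → E be the map P_r v = Σ_{i=1}^r ⟨v, φ_i⟩_H φ_i for some 0 ≤ r ≤ d. Then (1/M) Σ_{n=1}^M ‖y_n − P_r y_n‖_W² = Σ_{i=r+1}^d λ_i ‖φ_i‖_W². -/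

import Mathlib

open scoped InnerProductSpace

/-- Identity (2.1a) of Lemma 2.1: the mean-square POD projection error in a second
inner product `W` equals the tail sum of POD eigenvalues weighted by the `W`-norms
of the POD modes. -/
theorem pod_projection_error_W_norm
    {E : Type*} [NormedAddCommGroup E] [InnerProductSpace ℝ E]
    (M d : ℕ) (hM : 0 < M)
    (y : Fin M → E) (φ : Fin d → E) (lam : Fin d → ℝ)
    (hortho : Orthonormal ℝ φ)
    (hspan : ∀ n, y n ∈ Submodule.span ℝ (Set.range φ))
    (hlam_nonneg : ∀ i, 0 ≤ lam i)
    (hcorr : ∀ i j : Fin d,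
      (1 / (M : ℝ)) * ∑ n, ⟪y n, φ i⟫_ℝ * ⟪y n, φ j⟫_ℝ
        = if i = j then lam i else 0)
    (innerW : E → E → ℝ)
    (hW_symm : ∀ u v, innerW u v = innerW v u)
    (hW_add : ∀ u v w, innerW (u + v) w = innerW u w + innerW v w)
    (hW_smul : ∀ (c : ℝ) (u v : E), innerW (c • u) v = c * innerW u v)
    (hW_pos : ∀ u : E, u ≠ 0 → 0 < innerW u u)
    (r : ℕ) (hr : r ≤ d)
    (P : E → E)
    (hP : ∀ v, P v = ∑ i ∈ Finset.univ.filter (fun i : Fin d => (i : ℕ) < r),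
      ⟪v, φ i⟫_ℝ • φ i) :
    (1 / (M : ℝ)) * ∑ n, innerW (y n - P (y n)) (y n - P (y n))
      = ∑ i ∈ Finset.univ.filter (fun i : Fin d => r ≤ (i : ℕ)),
          lam i * innerW (φ i) (φ i) := by
  classical
  set c : Fin M → Fin d → ℝ := fun n i => ⟪y n, φ i⟫_ℝ with hc
  set S : Finset (Fin d) := Finset.univ.filter (fun i : Fin d => r ≤ (i : ℕ)) with hS
  set T : Finset (Fin d) := Finset.univ.filter (fun i : Fin d => (i : ℕ) < r) with hT
  -- sum-linearity of innerW in the first argument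
  have hW_zero : ∀ v, innerW 0 v = 0 := by
    intro v
    have := hW_smul 0 0 v
    simpa using this
  have hsum_left : ∀ (s : Finset (Fin d)) (f : Fin d → E) (v : E),
      innerW (∑ i ∈ s, f i) v = ∑ i ∈ s, innerW (f i) v := by
    intro s f v
    induction s using Finset.induction with
    | empty => simp [hW_zero]
    | insert _ _ h ih => rw [Finset.sum_insert h, hW_add, ih, Finset.sum_insert h]
  -- expansion of snapshots
  have hyexp : ∀ n, y n = ∑ i, c n i • φ i := by
    intro n
    obtain ⟨l, hl⟩ := (Submodule.mem_span_range_iff_exists_fun ℝ).1 (hspan n)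
    have hcl : ∀ i, c n i = l i := by
      intro i
      have := hortho.inner_left_fintype l i
      simp only [hc]
      rw [← hl]
      simpa using this
    rw [← hl]
    exact Finset.sum_congr rfl fun i _ => by rw [hcl i]
  -- residual
  have hres : ∀ n, y n - P (y n) = ∑ i ∈ S, c n i • φ i := by
    intro n
    have hPy : P (y n) = ∑ i ∈ T, c n i • φ i := hP (y n)
    have hsplit : (∑ i, c n i • φ i) = (∑ i ∈ T, c n i • φ i) + ∑ i ∈ S, c n i • φ i := by
      rw [hS, hT, ← Finset.sum_filter_add_sum_filter_not Finset.univ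
        (fun i : Fin d => (i : ℕ) < r)]
      congr 1
      apply Finset.sum_congr _ fun _ _ => rfl
      congr 1
      ext i
      simp [not_lt]
    rw [hPy]
    conv_lhs => rw [hyexp n, hsplit]
    abel
  -- expand the quadratic form
  have hquad : ∀ n, innerW (y n - P (y n)) (y n - P (y n))
      = ∑ i ∈ S, ∑ j ∈ S, c n i * c n j * innerW (φ i) (φ j) := by
    intro n
    rw [hres n, hsum_left]
    refine Finset.sum_congr rfl fun i _ => ?_
    rw [hW_smul, hW_symm, hsum_left, Finset.mul_sum]
    refine Finset.sum_congr rfl fun j _ => ?_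
    rw [hW_smul, hW_symm (φ j) (φ i)]
    ring
  calc (1 / (M : ℝ)) * ∑ n, innerW (y n - P (y n)) (y n - P (y n))
      = ∑ i ∈ S, ∑ j ∈ S, ((1 / (M : ℝ)) * ∑ n, c n i * c n j) * innerW (φ i) (φ j) := by
        simp_rw [hquad, Finset.mul_sum]
        rw [Finset.sum_comm]
        refine Finset.sum_congr rfl fun i _ => ?_
        rw [Finset.sum_comm]
        refine Finset.sum_congr rfl fun j _ => ?_
        rw [Finset.sum_mul]
        exact Finset.sum_congr rfl fun n _ => by ring
    _ = ∑ i ∈ S, lam i * innerW (φ i) (φ i) := by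
        refine Finset.sum_congr rfl fun i hi => ?_
        have h1 : ∀ j ∈ S, ((1 / (M : ℝ)) * ∑ n, c n i * c n j) * innerW (φ i) (φ j)
            = (if i = j then lam i * innerW (φ i) (φ j) else 0) := by
          intro j _
          rw [hcorr i j]
          split <;> simp
        rw [Finset.sum_congr rfl h1]
        simp [Finset.sum_ite_eq, hi]
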